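/- Let π be a finitely generated group, φ: π → π an endomorphism, and π' a φ-invariant finite normal subgroup of π. Then GR(φ) = max{GR(φ'), GR(φ̂)}, where φ' = φ|_{π'} and φ̂ is the induced endomorphism of π/π'. Moreover, GR(φ) = GR(φ̂) if and only if φ' is eventually trivial or φ̂ is not eventually trivial. -/

import Mathlib

open Filter Topology

/-- Word length of `g` with respect to the (symmetrized) generating set `S`. -/
noncomputable def wordLength {G : Type*} [Group G] (S : Set G) (g : G) : ℕ :=
  sInf {n : ℕ | ∃ w : List G, w.length = n ∧ (∀ x ∈ w, x ∈ S ∨ x⁻¹ ∈ S) ∧ w.prod = g}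

/-- `L_k(f, S) = max_{s ∈ S} L(f^k(s), S)`. -/
noncomputable def Lk {G : Type*} [Group G] (S : Finset G) (f : G → G) (k : ℕ) : ℕ :=
  S.sup fun s => wordLength (S : Set G) (f^[k] s)

/-- The growth rate `GR(f) = inf_{k ≥ 1} L_k(f,S)^{1/k}` (which equals
`lim_{k→∞} L_k(f,S)^{1/k}`). -/
noncomputable def GR {G : Type*} [Group G] (S : Finset G) (f : G → G) : ℝ :=
  ⨅ k : ℕ+, (Lk S f k : ℝ) ^ (((k : ℕ) : ℝ))⁻¹

/-- `f` is eventually trivial if some iterate is the trivial endomorphism. -/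
def EventuallyTrivial {G : Type*} [Group G] (f : G → G) : Prop :=
  ∃ N : ℕ, 0 < N ∧ ∀ g, f^[N] g = 1

section WL
variable {G : Type*} [Group G] {H : Type*} [Group H] {S T : Set G}

lemma wordLength_le {g : G} {w : List G} (hw : ∀ x ∈ w, x ∈ S ∨ x⁻¹ ∈ S)
    (hp : w.prod = g) : wordLength S g ≤ w.length :=
  Nat.sInf_le ⟨w, rfl, hw, hp⟩

lemma exists_word (hS : Subgroup.closure S = ⊤) (g : G) :
    ∃ w : List G, (∀ x ∈ w, x ∈ S ∨ x⁻¹ ∈ S) ∧ w.prod = g := by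
  have hg : g ∈ Submonoid.closure (S ∪ S⁻¹) := by
    rw [← Subgroup.closure_toSubmonoid]
    simp [hS, Subgroup.mem_toSubmonoid]
  obtain ⟨l, hl, hp⟩ := Submonoid.exists_list_of_mem_closure hg
  exact ⟨l, fun x hx => by rcases hl x hx with h | h; exacts [Or.inl h, Or.inr (Set.mem_inv.mp h)], hp⟩

lemma exists_min_word (hS : Subgroup.closure S = ⊤) (g : G) :
    ∃ w : List G, w.length = wordLength S g ∧ (∀ x ∈ w, x ∈ S ∨ x⁻¹ ∈ S) ∧ w.prod = g := by
  have hne : {n : ℕ | ∃ w : List G, w.length = n ∧ (∀ x ∈ w, x ∈ S ∨ x⁻¹ ∈ S) ∧ w.prod = g}.Nonempty := by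
    obtain ⟨w, hw, hp⟩ := exists_word hS g
    exact ⟨w.length, w, rfl, hw, hp⟩
  exact Nat.sInf_mem hne

lemma wordLength_one : wordLength S (1 : G) = 0 :=
  Nat.le_zero.mp (wordLength_le (w := []) (by simp) (by simp))

lemma wordLength_inv (hS : Subgroup.closure S = ⊤) (g : G) :
    wordLength S g⁻¹ = wordLength S g := by
  have key : ∀ h : G, wordLength S h⁻¹ ≤ wordLength S h := by
    intro h
    obtain ⟨w, hlen, hw, hp⟩ := exists_min_word hS h
    have := wordLength_le (S := S) (w := (w.map (fun x => x⁻¹)).reverse)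
      (fun x hx => by
        simp only [List.mem_reverse, List.mem_map] at hx
        obtain ⟨y, hy, rfl⟩ := hx
        rcases hw y hy with h | h
        · exact Or.inr (by simpa using h)
        · exact Or.inl h)
      (by rw [← List.prod_inv_reverse, hp])
    simpa [hlen] using this
  exact le_antisymm (key g) (by simpa using key g⁻¹)

lemma wordLength_mul (hS : Subgroup.closure S = ⊤) (g h : G) :
    wordLength S (g * h) ≤ wordLength S g + wordLength S h := by
  obtain ⟨w1, hl1, hw1, hp1⟩ := exists_min_word hS g
  obtain ⟨w2, hl2, hw2, hp2⟩ := exists_min_word hS h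
  have := wordLength_le (S := S) (w := w1 ++ w2)
    (fun x hx => by rcases List.mem_append.mp hx with h | h; exacts [hw1 x h, hw2 x h])
    (by rw [List.prod_append, hp1, hp2])
  simpa [hl1, hl2] using this

lemma mult_one {f : G → H} (hf : ∀ a b, f (a * b) = f a * f b) : f 1 = 1 := by
  have h : f 1 * f 1 = f 1 := by rw [← hf]; simp
  exact mul_eq_left.mp h

lemma mult_inv {f : G → H} (hf : ∀ a b, f (a * b) = f a * f b) (a : G) :
    f a⁻¹ = (f a)⁻¹ := by
  have h : f a * f a⁻¹ = 1 := by rw [← hf]; simp [mult_one hf]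
  exact (inv_eq_of_mul_eq_one_right h).symm

lemma mult_iterate {f : G → G} (hf : ∀ a b, f (a * b) = f a * f b) (k : ℕ) :
    ∀ a b, f^[k] (a * b) = f^[k] a * f^[k] b := by
  induction k with
  | zero => simp
  | succ n ih =>
    intro a b
    rw [Function.iterate_succ_apply', Function.iterate_succ_apply',
      Function.iterate_succ_apply', ih a b, hf]

lemma mult_prod {f : G → H} (hf : ∀ a b, f (a * b) = f a * f b) (w : List G) :
    f w.prod = (w.map f).prod := by
  induction w with
  | nil => simpa using mult_one hf
  | cons x t ih => simp [hf, ih]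

lemma wordLength_prod_le (hT : Subgroup.closure T = ⊤) {M : ℕ} :
    ∀ w : List G, (∀ x ∈ w, wordLength T x ≤ M) → wordLength T w.prod ≤ w.length * M := by
  intro w
  induction w with
  | nil => simp [wordLength_one]
  | cons x t ih =>
    intro hw
    calc wordLength T (x * t.prod) ≤ wordLength T x + wordLength T t.prod :=
          wordLength_mul hT _ _
      _ ≤ M + t.length * M := by
          exact Nat.add_le_add (hw x (by simp)) (ih fun y hy => hw y (by simp [hy]))
      _ = (x :: t).length * M := by simp [Nat.succ_mul, Nat.add_comm]

lemma wordLength_map_le (hS : Subgroup.closure S = ⊤) {T : Set H}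
    (hT : Subgroup.closure T = ⊤) (f : G → H) (hf : ∀ a b, f (a * b) = f a * f b)
    {M : ℕ} (hM : ∀ x : G, (x ∈ S ∨ x⁻¹ ∈ S) → wordLength T (f x) ≤ M) (g : G) :
    wordLength T (f g) ≤ wordLength S g * M := by
  obtain ⟨w, hlen, hw, hp⟩ := exists_min_word hS g
  have h1 : f g = (w.map f).prod := by rw [← hp, mult_prod hf]
  rw [h1, ← hlen]
  have := wordLength_prod_le (G := H) hT (w.map f) (fun y hy => by
    obtain ⟨x, hx, rfl⟩ := List.mem_map.mp hy
    exact hM x (hw x hx))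
  simpa using this

end WL

section LK
variable {G : Type*} [Group G] {S : Finset G} {f : G → G}

lemma wordLength_le_Lk {s : G} (hs : s ∈ S) (k : ℕ) :
    wordLength (S : Set G) (f^[k] s) ≤ Lk S f k := by
  unfold Lk; exact Finset.le_sup (f := fun s => wordLength (S : Set G) (f^[k] s)) hs

lemma wordLength_iter_le (hS : Subgroup.closure (S : Set G) = ⊤)
    (hf : ∀ a b, f (a * b) = f a * f b) (g : G) (k : ℕ) :
    wordLength (S : Set G) (f^[k] g) ≤ wordLength (S : Set G) g * Lk S f k := by
  refine wordLength_map_le hS hS _ (mult_iterate hf k) (fun x hx => ?_) g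
  rcases hx with h | h
  · exact wordLength_le_Lk h k
  · have hxe : f^[k] x = (f^[k] x⁻¹)⁻¹ := by rw [mult_inv (mult_iterate hf k)]; simp
    rw [hxe, wordLength_inv hS]
    exact wordLength_le_Lk h k

lemma Lk_submul (hS : Subgroup.closure (S : Set G) = ⊤)
    (hf : ∀ a b, f (a * b) = f a * f b) (k m : ℕ) :
    Lk S f (k + m) ≤ Lk S f m * Lk S f k := by
  unfold Lk
  refine Finset.sup_le fun s hs => ?_
  rw [Function.iterate_add_apply]
  calc wordLength (S : Set G) (f^[k] (f^[m] s))
      ≤ wordLength (S : Set G) (f^[m] s) * Lk S f k := wordLength_iter_le hS hf _ k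
    _ ≤ Lk S f m * Lk S f k := Nat.mul_le_mul_right _ (wordLength_le_Lk hs m)

end LK

section GRlem
variable {G : Type*} [Group G]

lemma GR_bddBelow (S : Finset G) (f : G → G) :
    BddBelow (Set.range fun k : ℕ+ => (Lk S f k : ℝ) ^ (((k : ℕ) : ℝ))⁻¹) := by
  refine ⟨0, ?_⟩
  rintro x ⟨k, rfl⟩
  positivity

lemma GR_nonneg (S : Finset G) (f : G → G) : 0 ≤ GR S f :=
  Real.iInf_nonneg fun k => by positivity

lemma GR_le_term (S : Finset G) (f : G → G) (k : ℕ+) :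
    GR S f ≤ (Lk S f k : ℝ) ^ (((k : ℕ) : ℝ))⁻¹ :=
  ciInf_le (GR_bddBelow S f) k

end GRlem

lemma inf_rpow_le_inf_rpow (a b : ℕ → ℕ) (C : ℕ) (hC : 1 ≤ C)
    (hab : ∀ k : ℕ, 0 < k → b k ≤ C * a k)
    (ha : ∀ k m : ℕ, a (k + m) ≤ a k * a m) :
    (⨅ k : ℕ+, (b (k : ℕ) : ℝ) ^ (((k : ℕ) : ℝ))⁻¹) ≤
      ⨅ k : ℕ+, (a (k : ℕ) : ℝ) ^ (((k : ℕ) : ℝ))⁻¹ := by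
  have hbdd : BddBelow (Set.range fun k : ℕ+ => (b (k : ℕ) : ℝ) ^ (((k : ℕ) : ℝ))⁻¹) := by
    refine ⟨0, ?_⟩; rintro x ⟨k, rfl⟩; positivity
  refine le_ciInf fun m => ?_
  have hpow : ∀ j : ℕ, a ((m : ℕ) * (j + 1)) ≤ a (m : ℕ) ^ (j + 1) := by
    intro j
    induction j with
    | zero => simp
    | succ n ih =>
      have : (m : ℕ) * (n + 2) = (m : ℕ) * (n + 1) + (m : ℕ) := by ring
      rw [this]
      calc a ((m : ℕ) * (n + 1) + (m : ℕ)) ≤ a ((m : ℕ) * (n + 1)) * a (m : ℕ) := ha _ _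
        _ ≤ a (m : ℕ) ^ (n + 1) * a (m : ℕ) := Nat.mul_le_mul_right _ ih
        _ = a (m : ℕ) ^ (n + 2) := by ring
  have hterm : ∀ j : ℕ,
      (⨅ k : ℕ+, (b (k : ℕ) : ℝ) ^ (((k : ℕ) : ℝ))⁻¹) ≤
        (C : ℝ) ^ (((m : ℕ) * (j + 1) : ℝ))⁻¹ * (a (m : ℕ) : ℝ) ^ (((m : ℕ) : ℝ))⁻¹ := by
    intro j
    have hKpos : 0 < (m : ℕ) * (j + 1) := Nat.mul_pos m.2 (Nat.succ_pos j)
    set K : ℕ+ := ⟨(m : ℕ) * (j + 1), hKpos⟩ with hK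
    have step1 : (⨅ k : ℕ+, (b (k : ℕ) : ℝ) ^ (((k : ℕ) : ℝ))⁻¹) ≤
        (b (K : ℕ) : ℝ) ^ (((K : ℕ) : ℝ))⁻¹ := ciInf_le hbdd K
    have hble : b (K : ℕ) ≤ C * a (m : ℕ) ^ (j + 1) :=
      le_trans (hab _ hKpos) (Nat.mul_le_mul_left C (hpow j))
    have step2 : (b (K : ℕ) : ℝ) ^ (((K : ℕ) : ℝ))⁻¹ ≤
        ((C * a (m : ℕ) ^ (j + 1) : ℕ) : ℝ) ^ (((K : ℕ) : ℝ))⁻¹ := by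
      apply Real.rpow_le_rpow (by positivity) (by exact_mod_cast hble) (by positivity)
    have hmj : ((K : ℕ) : ℝ) = ((m : ℕ) : ℝ) * ((j : ℝ) + 1) := by
      show (((m : ℕ) * (j + 1) : ℕ) : ℝ) = _
      push_cast; ring
    have step3 : ((C * a (m : ℕ) ^ (j + 1) : ℕ) : ℝ) ^ (((K : ℕ) : ℝ))⁻¹ =
        (C : ℝ) ^ (((m : ℕ) * (j + 1) : ℝ))⁻¹ * (a (m : ℕ) : ℝ) ^ (((m : ℕ) : ℝ))⁻¹ := by
      have hexp : ((j : ℝ) + 1) * (((m : ℕ) : ℝ) * ((j : ℝ) + 1))⁻¹ = (((m : ℕ) : ℝ))⁻¹ := by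
        have hm0 : ((m : ℕ) : ℝ) ≠ 0 := by
          have : (0:ℝ) < ((m : ℕ) : ℝ) := by exact_mod_cast m.2
          exact this.ne'
        have hj0 : (j : ℝ) + 1 ≠ 0 := by positivity
        field_simp
      push_cast
      rw [Real.mul_rpow (by positivity) (by positivity), hmj,
        ← Real.rpow_natCast (a (m : ℕ) : ℝ) (j + 1), ← Real.rpow_mul (by positivity)]
      push_cast
      rw [hexp]
    calc (⨅ k : ℕ+, (b (k : ℕ) : ℝ) ^ (((k : ℕ) : ℝ))⁻¹)
        ≤ (b (K : ℕ) : ℝ) ^ (((K : ℕ) : ℝ))⁻¹ := step1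
      _ ≤ ((C * a (m : ℕ) ^ (j + 1) : ℕ) : ℝ) ^ (((K : ℕ) : ℝ))⁻¹ := step2
      _ = _ := step3
  have hC0 : (0 : ℝ) < (C : ℝ) := by exact_mod_cast hC
  have h1 : Tendsto (fun j : ℕ => (((m : ℕ) * (j + 1) : ℝ))⁻¹) atTop (𝓝 0) := by
    apply Filter.Tendsto.inv_tendsto_atTop
    have hmr : (0 : ℝ) < ((m : ℕ) : ℝ) := by exact_mod_cast m.2
    apply Filter.Tendsto.const_mul_atTop hmr
    exact tendsto_atTop_add_const_right atTop 1 tendsto_natCast_atTop_atTop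
  have h2 : Tendsto (fun j : ℕ => (C : ℝ) ^ (((m : ℕ) * (j + 1) : ℝ))⁻¹) atTop (𝓝 1) := by
    have hc := (Real.continuousAt_const_rpow (a := (C : ℝ)) (b := 0) hC0.ne').tendsto
    have := hc.comp h1
    simpa [Real.rpow_zero, Function.comp_def] using this
  have h3 : Tendsto (fun j : ℕ => (C : ℝ) ^ (((m : ℕ) * (j + 1) : ℝ))⁻¹ *
      (a (m : ℕ) : ℝ) ^ (((m : ℕ) : ℝ))⁻¹) atTop (𝓝 ((a (m : ℕ) : ℝ) ^ (((m : ℕ) : ℝ))⁻¹)) := by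
    simpa using h2.mul_const _
  exact ge_of_tendsto h3 (Filter.Eventually.of_forall hterm)

section GR2
variable {G : Type*} [Group G] {H : Type*} [Group H]

lemma wordLength_eq_zero_iff {S : Set G} (hS : Subgroup.closure S = ⊤) {g : G} :
    wordLength S g = 0 ↔ g = 1 := by
  constructor
  · intro h
    have hne : {n : ℕ | ∃ w : List G, w.length = n ∧ (∀ x ∈ w, x ∈ S ∨ x⁻¹ ∈ S) ∧ w.prod = g}.Nonempty := by
      obtain ⟨w, hw, hp⟩ := exists_word hS g
      exact ⟨w.length, w, rfl, hw, hp⟩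
    have := Nat.sInf_mem hne
    rw [show sInf {n : ℕ | ∃ w : List G, w.length = n ∧ (∀ x ∈ w, x ∈ S ∨ x⁻¹ ∈ S) ∧ w.prod = g} = wordLength S g from rfl, h] at this
    obtain ⟨w, hlen, _, hp⟩ := this
    rw [List.length_eq_zero_iff.mp hlen] at hp
    simpa using hp.symm
  · rintro rfl; exact wordLength_one

lemma iterate_trivial_of_Lk_eq_zero {S : Finset G} {f : G → G}
    (hS : Subgroup.closure (S : Set G) = ⊤) (hf : ∀ a b, f (a * b) = f a * f b)
    {k : ℕ} (h : Lk S f k = 0) : ∀ g, f^[k] g = 1 := by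
  have hgen : ∀ s ∈ S, f^[k] s = 1 := by
    intro s hs
    have h0 : wordLength (S : Set G) (f^[k] s) = 0 :=
      Nat.le_zero.mp (h ▸ wordLength_le_Lk hs k)
    exact (wordLength_eq_zero_iff hS).mp h0
  intro g
  have hg : g ∈ Subgroup.closure (S : Set G) := by rw [hS]; trivial
  induction hg using Subgroup.closure_induction with
  | mem x hx => exact hgen x hx
  | one => exact mult_one (mult_iterate hf k)
  | mul x y hx hy ihx ihy => rw [mult_iterate hf k x y, ihx, ihy, one_mul]
  | inv x hx ihx => rw [mult_inv (mult_iterate hf k) x, ihx, inv_one]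

lemma one_le_Lk {S : Finset G} {f : G → G}
    (hS : Subgroup.closure (S : Set G) = ⊤) (hf : ∀ a b, f (a * b) = f a * f b)
    (hnt : ¬ EventuallyTrivial f) {k : ℕ} (hk : 0 < k) : 1 ≤ Lk S f k := by
  by_contra h
  push_neg at h
  exact hnt ⟨k, hk, iterate_trivial_of_Lk_eq_zero hS hf (Nat.lt_one_iff.mp h)⟩

lemma one_le_GR {S : Finset G} {f : G → G}
    (hS : Subgroup.closure (S : Set G) = ⊤) (hf : ∀ a b, f (a * b) = f a * f b)
    (hnt : ¬ EventuallyTrivial f) : 1 ≤ GR S f := by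
  refine le_ciInf fun k => ?_
  have h1 : (1 : ℝ) ≤ (Lk S f k : ℝ) := by exact_mod_cast one_le_Lk hS hf hnt k.2
  calc (1 : ℝ) = (1 : ℝ) ^ (((k : ℕ) : ℝ))⁻¹ := (Real.one_rpow _).symm
    _ ≤ (Lk S f k : ℝ) ^ (((k : ℕ) : ℝ))⁻¹ :=
        Real.rpow_le_rpow zero_le_one h1 (by positivity)

lemma GR_eq_zero_of_et {S : Finset G} {f : G → G} (het : EventuallyTrivial f) :
    GR S f = 0 := by
  obtain ⟨Nt, hNt, htr⟩ := het
  have hLk : Lk S f Nt = 0 := by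
    unfold Lk
    refine Nat.le_zero.mp (Finset.sup_le fun s _ => ?_)
    rw [htr s, wordLength_one]
  refine le_antisymm ?_ (GR_nonneg S f)
  have h3 : GR S f ≤ ((Lk S f Nt : ℕ) : ℝ) ^ ((Nt : ℝ))⁻¹ := GR_le_term S f ⟨Nt, hNt⟩
  rw [hLk] at h3
  have hne : ((Nt : ℝ))⁻¹ ≠ 0 := by positivity
  simpa [Real.zero_rpow hne] using h3

lemma GR_le_GR_of {S : Finset G} {f : G → G} {S₂ : Finset H} {f₂ : H → H}
    (hS : Subgroup.closure (S : Set G) = ⊤) (hf : ∀ a b, f (a * b) = f a * f b)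
    (C : ℕ) (hC : 1 ≤ C) (h : ∀ k : ℕ, 0 < k → Lk S₂ f₂ k ≤ C * Lk S f k) :
    GR S₂ f₂ ≤ GR S f := by
  unfold GR
  exact inf_rpow_le_inf_rpow (Lk S f) (Lk S₂ f₂) C hC h
    (fun k m => le_trans (Lk_submul hS hf k m) (le_of_eq (Nat.mul_comm _ _)))

lemma GR_le_one_of_bdd {S : Finset G} {f : G → G} (D : ℕ)
    (hD : ∀ k : ℕ, 0 < k → Lk S f k ≤ D) : GR S f ≤ 1 := by
  have h : GR S f ≤ ⨅ k : ℕ+, (((fun _ : ℕ => 1) (k : ℕ) : ℕ) : ℝ) ^ (((k : ℕ) : ℝ))⁻¹ := by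
    unfold GR
    refine inf_rpow_le_inf_rpow (fun _ => 1) (Lk S f) (D + 1) (by omega) ?_ (by simp)
    intro k hk
    simpa using le_trans (hD k hk) (Nat.le_succ D)
  calc GR S f ≤ _ := h
    _ = 1 := by simp [Real.one_rpow]

lemma Lk_le_mul {S S₂ : Finset G} {f : G → G}
    (hS : Subgroup.closure (S : Set G) = ⊤) (hS₂ : Subgroup.closure (S₂ : Set G) = ⊤)
    (hf : ∀ a b, f (a * b) = f a * f b) (k : ℕ) :
    Lk S₂ f k ≤ (S₂.sup (wordLength (S : Set G)) * S.sup (wordLength (S₂ : Set G)))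
      * Lk S f k := by
  set A := S₂.sup (wordLength (S : Set G)) with hA
  set A' := S.sup (wordLength (S₂ : Set G)) with hA'
  unfold Lk
  refine Finset.sup_le fun s₂ hs₂ => ?_
  have hM : ∀ x : G, (x ∈ (S : Set G) ∨ x⁻¹ ∈ (S : Set G)) →
      wordLength (S₂ : Set G) ((fun y => y) x) ≤ A' := by
    intro x hx
    rcases hx with h | h
    · exact Finset.le_sup h
    · have : wordLength (S₂ : Set G) x = wordLength (S₂ : Set G) x⁻¹ := by
        rw [← wordLength_inv hS₂ x⁻¹, inv_inv]
      rw [this]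
      exact Finset.le_sup h
  calc wordLength (S₂ : Set G) (f^[k] s₂)
      ≤ wordLength (S : Set G) (f^[k] s₂) * A' :=
        wordLength_map_le hS hS₂ (fun y => y) (fun _ _ => rfl) hM _
    _ ≤ (wordLength (S : Set G) s₂ * Lk S f k) * A' :=
        Nat.mul_le_mul_right _ (wordLength_iter_le hS hf s₂ k)
    _ ≤ (A * Lk S f k) * A' :=
        Nat.mul_le_mul_right _ (Nat.mul_le_mul_right _ (Finset.le_sup hs₂))
    _ = (A * A') * Lk S f k := by ring

lemma GR_genset_indep {S S₂ : Finset G} {f : G → G}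
    (hS : Subgroup.closure (S : Set G) = ⊤) (hS₂ : Subgroup.closure (S₂ : Set G) = ⊤)
    (hf : ∀ a b, f (a * b) = f a * f b) : GR S f = GR S₂ f := by
  have h1 : ∀ (U U₂ : Finset G), Subgroup.closure (U : Set G) = ⊤ →
      Subgroup.closure (U₂ : Set G) = ⊤ → GR U₂ f ≤ GR U f := by
    intro U U₂ hU hU₂
    refine GR_le_GR_of hU hf
      (max 1 (U₂.sup (wordLength (U : Set G)) * U.sup (wordLength (U₂ : Set G))))
      (le_max_left _ _) (fun k _ => ?_)
    exact le_trans (Lk_le_mul hU hU₂ hf k)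
      (Nat.mul_le_mul_right _ (le_max_right _ _))
  exact le_antisymm (h1 S₂ S hS₂ hS) (h1 S S₂ hS hS₂)

lemma wordLength_image_le {S : Set G} (hS : Subgroup.closure S = ⊤)
    (q : G → H) (hq : ∀ a b, q (a * b) = q a * q b) (g : G) :
    wordLength (q '' S) (q g) ≤ wordLength S g := by
  obtain ⟨w, hlen, hw, hp⟩ := exists_min_word hS g
  have h1 : q g = (w.map q).prod := by rw [← hp, mult_prod hq]
  rw [h1, ← hlen]
  have := wordLength_le (S := q '' S) (w := w.map q) (fun y hy => by
    obtain ⟨x, hx, rfl⟩ := List.mem_map.mp hy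
    rcases hw x hx with h | h
    · exact Or.inl ⟨x, h, rfl⟩
    · exact Or.inr ⟨x⁻¹, h, mult_inv hq x⟩) rfl
  simpa using this

end GR2

lemma exists_lift_word {G H : Type*} [Group G] [Group H] (q : G →* H) (Vs : Set G) :
    ∀ w : List H, (∀ x ∈ w, x ∈ (⇑q '' Vs) ∨ x⁻¹ ∈ (⇑q '' Vs)) →
    ∃ w' : List G, w'.length = w.length ∧ (∀ v ∈ w', v ∈ Vs ∨ v⁻¹ ∈ Vs) ∧
      q w'.prod = w.prod := by
  intro w
  induction w with
  | nil => exact fun _ => ⟨[], rfl, by simp, by simp⟩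
  | cons x t ih =>
    intro hw
    obtain ⟨w', hlen, hw', hp⟩ := ih (fun y hy => hw y (by simp [hy]))
    rcases hw x (by simp) with ⟨v, hv, hqv⟩ | ⟨v, hv, hqv⟩
    · refine ⟨v :: w', by simp [hlen], ?_, ?_⟩
      · intro u hu
        rcases List.mem_cons.mp hu with rfl | hu
        exacts [Or.inl hv, hw' u hu]
      · simp [map_mul, hp, hqv]
    · refine ⟨v⁻¹ :: w', by simp [hlen], ?_, ?_⟩
      · intro u hu
        rcases List.mem_cons.mp hu with rfl | hu
        exacts [Or.inr (by simpa using hv), hw' u hu]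
      · rw [List.prod_cons, map_mul, map_inv, hqv, inv_inv, hp, List.prod_cons]

/-- If `π'` is a `φ`-invariant finite normal subgroup of the finitely
generated group `π`, then `GR(φ) = max{GR(φ'), GR(φ̂)}`, and `GR(φ) = GR(φ̂)` if and only
if `φ'` is eventually trivial or `φ̂` is not eventually trivial. -/
theorem GR_eq_max_of_finite_normal {π : Type*} [Group π] (S : Finset π)
    (hS : Subgroup.closure (S : Set π) = ⊤) (φ : π →* π)
    (N : Subgroup π) [N.Normal] (hfin : (N : Set π).Finite) (hinv : ∀ g ∈ N, φ g ∈ N)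
    (S' : Finset N) (hS' : Subgroup.closure (S' : Set N) = ⊤)
    (T : Finset (π ⧸ N)) (hT : Subgroup.closure (T : Set (π ⧸ N)) = ⊤) :
    GR S ⇑φ = max (GR S' (fun x : N => (⟨φ x, hinv x x.2⟩ : N)))
        (GR T ⇑(QuotientGroup.map N N φ (fun g hg => hinv g hg))) ∧
    (GR S ⇑φ = GR T ⇑(QuotientGroup.map N N φ (fun g hg => hinv g hg)) ↔
      EventuallyTrivial (fun x : N => (⟨φ x, hinv x x.2⟩ : N)) ∨
      ¬ EventuallyTrivial ⇑(QuotientGroup.map N N φ (fun g hg => hinv g hg))) := by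
  classical
  set f' : N → N := fun x : N => (⟨φ x, hinv x x.2⟩ : N) with hf'def
  set φq := QuotientGroup.map N N φ (fun g hg => hinv g hg) with hφqdef
  have hfmul : ∀ a b : π, φ (a * b) = φ a * φ b := fun a b => map_mul φ a b
  have hf'mul : ∀ a b : N, f' (a * b) = f' a * f' b := fun a b =>
    Subtype.ext (by simp [hf'def, map_mul])
  have hqmul : ∀ a b : π ⧸ N, φq (a * b) = φq a * φq b := fun a b => map_mul φq a b
  have hcoe_iter : ∀ (k : ℕ) (x : N), ((f'^[k] x : N) : π) = (⇑φ)^[k] (x : π) := by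
    intro k
    induction k with
    | zero => intro x; simp
    | succ n ih =>
      intro x
      rw [Function.iterate_succ_apply', Function.iterate_succ_apply', ← ih x]
  have hq_iter : ∀ (k : ℕ) (g : π),
      (⇑φq)^[k] (QuotientGroup.mk g) = QuotientGroup.mk ((⇑φ)^[k] g) := by
    intro k
    induction k with
    | zero => intro g; simp
    | succ n ih =>
      intro g
      rw [Function.iterate_succ_apply', Function.iterate_succ_apply', ih g]
      rfl
  -- eventually-trivial transfers
  have et_res : EventuallyTrivial ⇑φ → EventuallyTrivial f' := by
    rintro ⟨Nt, h0, htr⟩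
    exact ⟨Nt, h0, fun x => Subtype.ext (by rw [hcoe_iter, htr]; rfl)⟩
  have et_comb : EventuallyTrivial f' → EventuallyTrivial ⇑φq → EventuallyTrivial ⇑φ := by
    rintro ⟨P, hP, htrP⟩ ⟨M, hM, htrM⟩
    refine ⟨M + P, by omega, fun g => ?_⟩
    have h1 : (⇑φ)^[M] g ∈ N := by
      have h := htrM (QuotientGroup.mk g)
      rw [hq_iter] at h
      exact (QuotientGroup.eq_one_iff _).mp h
    have h2 : (⇑φ)^[P] ((⇑φ)^[M] g) = 1 := by
      have h := congrArg (Subtype.val) (htrP ⟨(⇑φ)^[M] g, h1⟩)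
      rw [hcoe_iter] at h
      simpa using h
    rw [Nat.add_comm, Function.iterate_add_apply]
    exact h2
  -- the enlarged generating set V and its image T₀
  set V : Finset π := S ∪ hfin.toFinset with hVdef
  have hNV : ∀ n : π, n ∈ N → n ∈ (V : Set π) := by
    intro n hn
    simp [hVdef, hfin.mem_toFinset, hn]
  have hV : Subgroup.closure (V : Set π) = ⊤ := by
    rw [eq_top_iff, ← hS]
    exact Subgroup.closure_mono (by intro x hx; simp [hVdef]; exact Or.inl hx)
  set T₀ : Finset (π ⧸ N) := V.image (QuotientGroup.mk) with hT₀def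
  have hT₀coe : (T₀ : Set (π ⧸ N)) = QuotientGroup.mk '' (V : Set π) := by
    simp [hT₀def]
  have hT₀ : Subgroup.closure (T₀ : Set (π ⧸ N)) = ⊤ := by
    rw [hT₀coe, ← QuotientGroup.coe_mk' N, ← MonoidHom.map_closure, hV]
    exact Subgroup.map_top_of_surjective _ (QuotientGroup.mk'_surjective N)
  -- comparison 1 : Lk T₀ φq ≤ Lk V φ
  have hcomp1 : ∀ k : ℕ, Lk T₀ ⇑φq k ≤ Lk V ⇑φ k := by
    intro k
    unfold Lk
    refine Finset.sup_le fun t ht => ?_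
    obtain ⟨v, hv, rfl⟩ := Finset.mem_image.mp ht
    calc wordLength (T₀ : Set (π ⧸ N)) ((⇑φq)^[k] (QuotientGroup.mk v))
        = wordLength (QuotientGroup.mk '' (V : Set π))
            ((QuotientGroup.mk' N) ((⇑φ)^[k] v)) := by
          rw [hq_iter, hT₀coe, QuotientGroup.coe_mk']
      _ ≤ wordLength (V : Set π) ((⇑φ)^[k] v) := by
          rw [← QuotientGroup.coe_mk' N]
          exact wordLength_image_le hV _ (fun a b => map_mul _ a b) _
      _ ≤ V.sup (fun s => wordLength (V : Set π) ((⇑φ)^[k] s)) :=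
          Finset.le_sup (f := fun s => wordLength (V : Set π) ((⇑φ)^[k] s)) hv
  -- comparison 2 : Lk V φ ≤ Lk T₀ φq + 1
  have hcomp2 : ∀ k : ℕ, Lk V ⇑φ k ≤ Lk T₀ ⇑φq k + 1 := by
    intro k
    have hmain : ∀ s ∈ V, wordLength (V : Set π) ((⇑φ)^[k] s) ≤ Lk T₀ ⇑φq k + 1 := by
      intro s hs
      obtain ⟨w, hlen, hw, hp⟩ := exists_min_word hT₀ (QuotientGroup.mk ((⇑φ)^[k] s))
      rw [hT₀coe, ← QuotientGroup.coe_mk' N] at hw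
      obtain ⟨w', hlen', hw', hp'⟩ := exists_lift_word (QuotientGroup.mk' N) (V : Set π) w hw
      have hn : w'.prod⁻¹ * (⇑φ)^[k] s ∈ N := by
        rw [← QuotientGroup.eq_one_iff]
        have : (QuotientGroup.mk (w'.prod⁻¹ * (⇑φ)^[k] s) : π ⧸ N) =
            (QuotientGroup.mk w'.prod)⁻¹ * QuotientGroup.mk ((⇑φ)^[k] s) := by
          rw [QuotientGroup.mk_mul, QuotientGroup.mk_inv]
        rw [QuotientGroup.coe_mk'] at hp'
        rw [this, hp', hp]
        group
      have hzeq : (⇑φ)^[k] s = w'.prod * (w'.prod⁻¹ * (⇑φ)^[k] s) := by group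
      have hb1 : wordLength (V : Set π) w'.prod ≤ Lk T₀ ⇑φq k := by
        have := wordLength_le (S := (V : Set π)) hw' rfl
        rw [hlen', hlen] at this
        refine le_trans this ?_
        have heq : (QuotientGroup.mk ((⇑φ)^[k] s) : π ⧸ N) = (⇑φq)^[k] (QuotientGroup.mk s) :=
          (hq_iter k s).symm
        rw [heq]
        exact wordLength_le_Lk (Finset.mem_image.mpr ⟨s, hs, rfl⟩) k
      have hb2 : wordLength (V : Set π) (w'.prod⁻¹ * (⇑φ)^[k] s) ≤ 1 := by
        refine wordLength_le (S := (V : Set π)) (w := [w'.prod⁻¹ * (⇑φ)^[k] s])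
          ?_ List.prod_singleton
        intro x hx
        simp only [List.mem_singleton] at hx
        subst hx
        exact Or.inl (hNV _ hn)
      calc wordLength (V : Set π) ((⇑φ)^[k] s)
          = wordLength (V : Set π) (w'.prod * (w'.prod⁻¹ * (⇑φ)^[k] s)) :=
            congrArg (wordLength (V : Set π)) hzeq
        _ ≤ wordLength (V : Set π) w'.prod +
            wordLength (V : Set π) (w'.prod⁻¹ * (⇑φ)^[k] s) := wordLength_mul hV _ _
        _ ≤ Lk T₀ ⇑φq k + 1 := Nat.add_le_add hb1 hb2
    unfold Lk
    exact Finset.sup_le hmain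
  -- boundedness of Lk for f'
  haveI : Fintype N := hfin.fintype
  set D := (Finset.univ : Finset N).sup (wordLength (S' : Set N)) with hDdef
  have hD : ∀ k : ℕ, 0 < k → Lk S' f' k ≤ D := by
    intro k _
    unfold Lk
    exact Finset.sup_le fun s _ => Finset.le_sup (Finset.mem_univ _)
  have hB_le : GR S' f' ≤ 1 := GR_le_one_of_bdd D hD
  -- GR transfers
  have hGR_SV : GR S ⇑φ = GR V ⇑φ := GR_genset_indep hS hV hfmul
  have hGR_T : GR T ⇑φq = GR T₀ ⇑φq := GR_genset_indep hT hT₀ hqmul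
  have hQ_le : GR T₀ ⇑φq ≤ GR V ⇑φ :=
    GR_le_GR_of hV hfmul 1 le_rfl (fun k _ => by simpa using hcomp1 k)
  by_cases hntQ : EventuallyTrivial ⇑φq
  · -- quotient endomorphism eventually trivial
    obtain ⟨M, hM, htrM⟩ := hntQ
    have hLkT₀M : Lk T₀ ⇑φq M = 0 := by
      unfold Lk
      refine Nat.le_zero.mp (Finset.sup_le fun t _ => ?_)
      rw [htrM t, wordLength_one]
    have hLkVM : Lk V ⇑φ M ≤ 1 := by
      have := hcomp2 M
      omega
    have hCq0 : GR T ⇑φq = 0 := GR_eq_zero_of_et ⟨M, hM, htrM⟩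
    by_cases het' : EventuallyTrivial f'
    · have hetφ : EventuallyTrivial ⇑φ := et_comb het' ⟨M, hM, htrM⟩
      have hA0 : GR S ⇑φ = 0 := GR_eq_zero_of_et hetφ
      have hB0 : GR S' f' = 0 := GR_eq_zero_of_et het'
      refine ⟨by rw [hA0, hB0, hCq0]; simp, ?_⟩
      constructor
      · intro _; exact Or.inl het'
      · intro _; rw [hA0, hCq0]
    · have hntφ : ¬ EventuallyTrivial ⇑φ := fun h => het' (et_res h)
      have hA1 : 1 ≤ GR S ⇑φ := one_le_GR hS hfmul hntφ
      have hAle : GR S ⇑φ ≤ 1 := by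
        rw [hGR_SV]
        have h1 : GR V ⇑φ ≤ ((Lk V ⇑φ M : ℕ) : ℝ) ^ ((M : ℝ))⁻¹ := GR_le_term V ⇑φ ⟨M, hM⟩
        refine le_trans h1 (Real.rpow_le_one (by positivity) ?_ (by positivity))
        exact_mod_cast hLkVM
      have hA : GR S ⇑φ = 1 := le_antisymm hAle hA1
      have hB1 : 1 ≤ GR S' f' := one_le_GR hS' hf'mul het'
      have hB : GR S' f' = 1 := le_antisymm hB_le hB1
      refine ⟨by rw [hA, hB, hCq0]; norm_num, ?_⟩
      constructor
      · intro h; rw [hA, hCq0] at h; norm_num at h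
      · rintro (h | h)
        · exact absurd h het'
        · exact absurd ⟨M, hM, htrM⟩ h
  · -- quotient endomorphism not eventually trivial
    have h2le : GR V ⇑φ ≤ GR T₀ ⇑φq := by
      refine GR_le_GR_of hT₀ hqmul 2 (by omega) (fun k hk => ?_)
      have h1 := hcomp2 k
      have h2 := one_le_Lk hT₀ hqmul hntQ hk
      omega
    have hmain : GR S ⇑φ = GR T ⇑φq := by
      rw [hGR_SV, hGR_T]
      exact le_antisymm h2le hQ_le
    have hCq1 : 1 ≤ GR T ⇑φq := one_le_GR hT hqmul hntQ
    refine ⟨?_, ?_⟩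
    · rw [hmain, max_eq_right (le_trans hB_le hCq1)]
    · exact ⟨fun _ => Or.inr hntQ, fun _ => hmain⟩
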